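/- Let x₁, …, x_M be independent random points in ℝⁿ, where each x_k has independent components supported in [0,1], all points share the same component-wise means μ = (μ₁,…,μ_n), and the minimal average component variance σ₀² = min_k (1/n)Σᵢ Var[x_k^i] is positive. Let c be the center (1/2,…,1/2) of the cube. If M < √δ · exp((256/81)·n·σ₀⁴), then the set {x₁, …, x_M} is (1,c)-Fisher separable with probability greater than 1 − δ. -/

import Mathlib

open MeasureTheory ProbabilityTheory Real
open scoped RealInnerProductSpace ENNReal NNReal
open MeasurableSpace

lemma scalar_core (p : ℝ) (hp0 : 0 ≤ p) (hp1 : p ≤ 1) (h : ℝ) :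
    Real.exp (-p*h) * (1 - p + p * Real.exp h) ≤ Real.exp (h^2/8) := by
  set D : ℝ → ℝ := fun x => 1 - p + p * Real.exp x with hDdef
  have hD : ∀ x, 0 < D x := by
    intro x
    rcases lt_or_eq_of_le hp1 with h1 | h1
    · have := Real.exp_pos x; simp only [hDdef]; nlinarith
    · have := Real.exp_pos x; simp only [hDdef, ← h1]; nlinarith
  set F : ℝ → ℝ := fun x => x^2/8 + p*x - Real.log (D x) with hFdef
  set G : ℝ → ℝ := fun x => x/4 + p - p * Real.exp x / D x with hGdef
  have hd : ∀ x, HasDerivAt D (p * Real.exp x) x := by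
    intro x
    exact ((Real.hasDerivAt_exp x).const_mul p).const_add (1 - p)
  have hF' : ∀ x, HasDerivAt F (G x) x := by
    intro x
    have hlog : HasDerivAt (fun y => Real.log (D y)) (p * Real.exp x / D x) x :=
      (hd x).log (hD x).ne'
    have h1 : HasDerivAt (fun y : ℝ => y^2/8 + p*y) (x/4 + p) x := by
      have := ((hasDerivAt_pow 2 x).div_const 8).add ((hasDerivAt_id x).const_mul p)
      exact this.congr_deriv (by norm_num; ring)
    exact h1.sub hlog
  have hG' : ∀ x, HasDerivAt G (1/4 - p * Real.exp x * (1 - p) / (D x)^2) x := by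
    intro x
    have hq : HasDerivAt (fun y => p * Real.exp y / D y)
        ((p * Real.exp x * D x - p * Real.exp x * (p * Real.exp x)) / (D x)^2) x :=
      ((Real.hasDerivAt_exp x).const_mul p).div (hd x) (hD x).ne'
    have h1 : HasDerivAt (fun y : ℝ => y/4 + p) (1/4) x := by
      simpa using ((hasDerivAt_id x).div_const 4).add_const p
    have := h1.sub hq
    refine this.congr_deriv ?_
    have hDx : D x = 1 - p + p * Real.exp x := rfl
    rw [hDx]
    ring
  have hG'nonneg : ∀ x, 0 ≤ 1/4 - p * Real.exp x * (1 - p) / (D x)^2 := by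
    intro x
    have hDx : (0:ℝ) < (D x)^2 := pow_pos (hD x) 2
    rw [sub_nonneg, div_le_iff₀ hDx]
    have hex := (Real.exp_pos x).le
    have hDeq : D x = 1 - p + p * Real.exp x := rfl
    nlinarith [sq_nonneg ((1-p) - p * Real.exp x), mul_nonneg hp0 hex]
  have hGmono : Monotone G :=
    monotone_of_deriv_nonneg (fun x => (hG' x).differentiableAt)
      (fun x => by rw [(hG' x).deriv]; exact hG'nonneg x)
  have hG0 : G 0 = 0 := by
    simp [hGdef, hDdef]
  have hFdiff : Differentiable ℝ F := fun x => (hF' x).differentiableAt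
  have hF0 : F 0 = 0 := by
    simp [hFdef, hDdef]
  have hFnonneg : 0 ≤ F h := by
    rcases le_total 0 h with hh | hh
    · have : F 0 ≤ F h := by
        apply monotoneOn_of_deriv_nonneg (convex_Ici 0) hFdiff.continuous.continuousOn
          (fun x _ => (hFdiff x).differentiableWithinAt)
          (fun x hx => ?_) (Set.self_mem_Ici) hh hh
        rw [(hF' x).deriv, ← hG0]
        exact hGmono (le_of_lt (by simpa using hx))
      linarith [hF0]
    · have : F h ≥ F 0 := by
        apply antitoneOn_of_deriv_nonpos (convex_Iic 0) hFdiff.continuous.continuousOn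
          (fun x _ => (hFdiff x).differentiableWithinAt)
          (fun x hx => ?_) hh Set.self_mem_Iic hh
        rw [(hF' x).deriv, ← hG0]
        exact hGmono (le_of_lt (by simpa using hx))
      linarith [hF0]
  have hlog : Real.log (D h) ≤ h^2/8 + p*h := by
    simp only [hFdef] at hFnonneg; linarith
  have hDle : D h ≤ Real.exp (h^2/8 + p*h) := by
    rw [← Real.exp_log (hD h)]
    exact Real.exp_le_exp.mpr hlog
  calc Real.exp (-p*h) * (1 - p + p * Real.exp h) = Real.exp (-p*h) * D h := rfl
    _ ≤ Real.exp (-p*h) * Real.exp (h^2/8 + p*h) :=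
        mul_le_mul_of_nonneg_left hDle (Real.exp_pos _).le
    _ = Real.exp (h^2/8) := by rw [← Real.exp_add]; ring_nf


lemma my_integrable_of_bounded {Ω : Type*} [MeasurableSpace Ω] {μ : Measure Ω}
    [IsProbabilityMeasure μ] {f : Ω → ℝ} (hm : AEStronglyMeasurable f μ) (C : ℝ)
    (hC : ∀ ω, |f ω| ≤ C) : Integrable f μ :=
  (integrable_const C).mono' hm (ae_of_all _ (fun ω => by simpa using hC ω))

lemma hoeffding_mgf {Ω : Type*} [MeasurableSpace Ω] (μ : Measure Ω) [IsProbabilityMeasure μ]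
    {Y : Ω → ℝ} {a b : ℝ} (hY : ∀ ω, Y ω ∈ Set.Icc a b)
    (hm : Measurable Y) (h0 : ∫ ω, Y ω ∂μ = 0) (s : ℝ) :
    mgf Y μ s ≤ Real.exp (s^2*(b-a)^2/8) := by
  have hab : a ≤ b := le_trans (hY (Classical.choice ?_ : Ω)).1 (hY _).2
  swap
  · by_contra hempty
    rw [not_nonempty_iff] at hempty
    have h1 : (μ Set.univ) = 1 := measure_univ
    rw [Set.univ_eq_empty_iff.mpr hempty, measure_empty] at h1
    simp at h1
  have hintY : Integrable Y μ :=
    my_integrable_of_bounded hm.aestronglyMeasurable (max |a| |b|) (fun ω => by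
      rcases hY ω with ⟨h1, h2⟩
      rw [abs_le]
      constructor
      · exact le_trans (neg_le_neg (le_max_left |a| |b|)) (by cases abs_cases a with
          | inl h => linarith [h.1] | inr h => linarith [h.1])
      · exact le_trans h2 (le_trans (le_abs_self b) (le_max_right _ _)))
  have ha0 : a ≤ 0 := by
    have : ∫ (_ : Ω), a ∂μ ≤ ∫ ω, Y ω ∂μ :=
      integral_mono (integrable_const a) hintY (fun ω => (hY ω).1)
    simpa [h0] using this
  have hb0 : 0 ≤ b := by
    have : ∫ ω, Y ω ∂μ ≤ ∫ (_ : Ω), b ∂μ :=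
      integral_mono hintY (integrable_const b) (fun ω => (hY ω).2)
    simpa [h0] using this
  rcases eq_or_lt_of_le hab with heq | hlt
  · -- a = b, so Y = a = 0
    have hYa : ∀ ω, Y ω = a := fun ω => le_antisymm (heq ▸ (hY ω).2) (hY ω).1
    have ha : a = 0 := le_antisymm ha0 (by
      have : ∫ ω, Y ω ∂μ = a := by simp [funext hYa]
      linarith [this ▸ le_refl a, h0 ▸ this.symm.le, h0 ▸ this.symm.ge])
    have : mgf Y μ s = 1 := by
      unfold mgf
      have : ∀ ω, Real.exp (s * Y ω) = 1 := fun ω => by rw [hYa, ha]; simp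
      simp [funext this]
    rw [this]
    exact Real.one_le_exp (by positivity)
  · have hba : 0 < b - a := by linarith
    have hint : Integrable (fun ω => Real.exp (s * Y ω)) μ :=
      my_integrable_of_bounded ((Real.measurable_exp.comp (hm.const_mul s)).aestronglyMeasurable) (Real.exp (|s| * max |a| |b|)) (fun ω => by
        rw [abs_of_pos (Real.exp_pos _)]
        apply Real.exp_le_exp.mpr
        calc s * Y ω ≤ |s * Y ω| := le_abs_self _
          _ = |s| * |Y ω| := abs_mul s (Y ω)
          _ ≤ |s| * max |a| |b| := by
              apply mul_le_mul_of_nonneg_left _ (abs_nonneg s)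
              rcases hY ω with ⟨h1, h2⟩
              rw [abs_le]
              refine ⟨?_, le_trans h2 (le_trans (le_abs_self b) (le_max_right _ _))⟩
              exact le_trans (neg_le_neg (le_max_left |a| |b|))
                (by rcases abs_cases a with h | h <;> linarith [h.1]))
    set c1 : ℝ := (b*Real.exp (s*a) - a*Real.exp (s*b))/(b-a) with hc1
    set c2 : ℝ := (Real.exp (s*b) - Real.exp (s*a))/(b-a) with hc2
    have hptw : ∀ ω, Real.exp (s * Y ω) ≤ c1 + c2 * Y ω := by
      intro ω
      rcases hY ω with ⟨h1, h2⟩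
      set x := Y ω
      have hl1 : (0:ℝ) ≤ (b-x)/(b-a) := div_nonneg (by linarith) hba.le
      have hl2 : (0:ℝ) ≤ (x-a)/(b-a) := div_nonneg (by linarith) hba.le
      have hls : (b-x)/(b-a) + (x-a)/(b-a) = 1 := by field_simp; ring
      have hcvx := convexOn_exp.2 (Set.mem_univ (s*a)) (Set.mem_univ (s*b)) hl1 hl2 hls
      simp only [smul_eq_mul] at hcvx
      have harg : (b-x)/(b-a) * (s*a) + (x-a)/(b-a) * (s*b) = s * x := by
        field_simp; ring
      rw [harg] at hcvx
      calc Real.exp (s * x) ≤ (b-x)/(b-a) * Real.exp (s*a) + (x-a)/(b-a) * Real.exp (s*b) := hcvx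
        _ = c1 + c2 * x := by rw [hc1, hc2]; field_simp; ring
    have hkey : mgf Y μ s ≤ c1 := by
      have : mgf Y μ s ≤ ∫ ω, (c1 + c2 * Y ω) ∂μ :=
        integral_mono hint (by exact (integrable_const c1).add (hintY.const_mul c2)) hptw
      rwa [integral_add (integrable_const c1) (hintY.const_mul c2),
        integral_const, integral_const_mul, h0, mul_zero, add_zero,
        probReal_univ, one_smul] at this
    set p : ℝ := -a/(b-a) with hp
    set hh : ℝ := s*(b-a) with hhh
    have hp0 : 0 ≤ p := div_nonneg (by linarith) hba.le
    have hp1 : p ≤ 1 := (div_le_one hba).mpr (by linarith)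
    have e1 : s*a = -p*hh := by rw [hp, hhh]; field_simp
    have e2 : s*b = -p*hh + hh := by rw [hp, hhh]; field_simp; ring
    have hc1eq : c1 = Real.exp (-p*hh) * (1 - p + p * Real.exp hh) := by
      rw [hc1, e1, e2, Real.exp_add, hp]
      field_simp
      ring
    calc mgf Y μ s ≤ c1 := hkey
      _ ≤ Real.exp (hh^2/8) := hc1eq ▸ scalar_core p hp0 hp1 hh
      _ = Real.exp (s^2*(b-a)^2/8) := by rw [hhh]; ring_nf


lemma exp_bdd_integrable {Ω : Type*} [MeasurableSpace Ω] {μ : Measure Ω}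
    [IsProbabilityMeasure μ] {f : Ω → ℝ} (hm : Measurable f) {a b : ℝ}
    (hf : ∀ ω, f ω ∈ Set.Icc a b) (s : ℝ) :
    Integrable (fun ω => Real.exp (s * f ω)) μ := by
  apply my_integrable_of_bounded ((Real.measurable_exp.comp (hm.const_mul s)).aestronglyMeasurable)
    (Real.exp (|s| * max |a| |b|))
  intro ω
  show |Real.exp (s * f ω)| ≤ _
  rw [abs_of_pos (Real.exp_pos _)]
  apply Real.exp_le_exp.mpr
  calc s * f ω ≤ |s * f ω| := le_abs_self _
    _ = |s| * |f ω| := abs_mul s (f ω)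
    _ ≤ |s| * max |a| |b| := by
        apply mul_le_mul_of_nonneg_left _ (abs_nonneg s)
        rcases hf ω with ⟨h1, h2⟩
        rw [abs_le]
        refine ⟨?_, le_trans h2 (le_trans (le_abs_self b) (le_max_right _ _))⟩
        exact le_trans (neg_le_neg (le_max_left |a| |b|))
          (by rcases abs_cases a with h | h <;> linarith [h.1])

lemma bdd_integrable {Ω : Type*} [MeasurableSpace Ω] {μ : Measure Ω}
    [IsProbabilityMeasure μ] {f : Ω → ℝ} (hm : Measurable f) {a b : ℝ}
    (hf : ∀ ω, f ω ∈ Set.Icc a b) : Integrable f μ := by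
  apply my_integrable_of_bounded hm.aestronglyMeasurable (max |a| |b|)
  intro ω
  rcases hf ω with ⟨h1, h2⟩
  rw [abs_le]
  refine ⟨?_, le_trans h2 (le_trans (le_abs_self b) (le_max_right _ _))⟩
  exact le_trans (neg_le_neg (le_max_left |a| |b|))
    (by rcases abs_cases a with h | h <;> linarith [h.1])

lemma mgf_le_of_mean (μ' : ℝ) {Ω : Type*} [MeasurableSpace Ω] (μ : Measure Ω)
    [IsProbabilityMeasure μ] {f : Ω → ℝ} (hm : Measurable f) {a b : ℝ}
    (hf : ∀ ω, f ω ∈ Set.Icc a b) (hmean : ∫ ω, f ω ∂μ = μ') (s : ℝ) :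
    mgf f μ s ≤ Real.exp (s * μ' + s^2*(b-a)^2/8) := by
  have hintf : Integrable f μ := bdd_integrable hm hf
  have hshift : mgf f μ s = Real.exp (s * μ') * mgf (fun ω => f ω - μ') μ s := by
    unfold mgf
    rw [← integral_const_mul]
    congr 1
    ext ω
    rw [← Real.exp_add]
    ring_nf
  rw [hshift]
  have hb : ∀ ω, f ω - μ' ∈ Set.Icc (a - μ') (b - μ') := fun ω =>
    ⟨by linarith [(hf ω).1], by linarith [(hf ω).2]⟩
  have hz : ∫ ω, (f ω - μ') ∂μ = 0 := by
    rw [integral_sub hintf (integrable_const μ'), hmean, integral_const]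
    simp
  have := hoeffding_mgf μ hb (hm.sub_const μ') hz s
  calc Real.exp (s * μ') * mgf (fun ω => f ω - μ') μ s
      ≤ Real.exp (s * μ') * Real.exp (s^2*((b - μ') - (a - μ'))^2/8) :=
        mul_le_mul_of_nonneg_left this (Real.exp_pos _).le
    _ = Real.exp (s * μ' + s^2*(b-a)^2/8) := by rw [← Real.exp_add]; ring_nf

lemma hoeffding_sum {Ω : Type*} [MeasurableSpace Ω] (μ : Measure Ω) [IsProbabilityMeasure μ]
    {n : ℕ} (hn : 0 < n) {z : Fin n → Ω → ℝ} (hmeas : ∀ i, Measurable (z i))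
    (hindep : iIndepFun z μ)
    {a b : ℝ} (hab : a < b) (hz : ∀ i ω, z i ω ∈ Set.Icc a b)
    {t : ℝ} (ht : 0 < t) (hμsum : ∑ i, ∫ ω, z i ω ∂μ ≤ -t) :
    (μ {ω | 0 ≤ ∑ i, z i ω}).toReal ≤ Real.exp (-2*t^2/(n*(b-a)^2)) := by
  have hba : 0 < b - a := by linarith
  have hnR : (0:ℝ) < n := Nat.cast_pos.mpr hn
  set s : ℝ := 4*t/(n*(b-a)^2) with hs
  have hs0 : 0 < s := by positivity
  -- sum as function
  have hsum_meas : Measurable (fun ω => ∑ i, z i ω) := by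
    apply Finset.measurable_sum
    exact fun i _ => hmeas i
  have hsum_bdd : ∀ ω, (∑ i, z i ω) ∈ Set.Icc ((n:ℝ)*a) ((n:ℝ)*b) := by
    intro ω
    constructor
    · calc (n:ℝ)*a = ∑ _i : Fin n, a := by simp [mul_comm]
        _ ≤ ∑ i, z i ω := Finset.sum_le_sum (fun i _ => (hz i ω).1)
    · calc ∑ i, z i ω ≤ ∑ _i : Fin n, b := Finset.sum_le_sum (fun i _ => (hz i ω).2)
        _ = (n:ℝ)*b := by simp [mul_comm]
  have hint : Integrable (fun ω => Real.exp (s * ∑ i, z i ω)) μ :=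
    exp_bdd_integrable hsum_meas hsum_bdd s
  have hchern := measure_ge_le_exp_mul_mgf (X := fun ω => ∑ i, z i ω) (μ := μ) 0 hs0.le hint
  simp only [neg_mul, mul_zero, neg_zero, Real.exp_zero, one_mul] at hchern
  -- mgf of sum = product
  have hmgfsum : mgf (fun ω => ∑ i, z i ω) μ s = ∏ i, mgf (z i) μ s := by
    have := hindep.mgf_sum (fun i => hmeas i) Finset.univ (t := s)
    rw [← this]
    congr 1
    ext ω
    simp
  have hprodle : ∏ i, mgf (z i) μ s ≤ Real.exp (s * (∑ i, ∫ ω, z i ω ∂μ) + n * (s^2*(b-a)^2/8)) := by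
    calc ∏ i, mgf (z i) μ s
        ≤ ∏ i, Real.exp (s * (∫ ω, z i ω ∂μ) + s^2*(b-a)^2/8) := by
          apply Finset.prod_le_prod (fun i _ => mgf_nonneg)
          exact fun i _ => mgf_le_of_mean _ μ (hmeas i) (hz i) rfl s
      _ = Real.exp (∑ i, (s * (∫ ω, z i ω ∂μ) + s^2*(b-a)^2/8)) := (Real.exp_sum _ _).symm
      _ = Real.exp (s * (∑ i, ∫ ω, z i ω ∂μ) + n * (s^2*(b-a)^2/8)) := by
          rw [Finset.sum_add_distrib, Finset.mul_sum]
          simp [mul_comm]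
  have hfinal : s * (∑ i, ∫ ω, z i ω ∂μ) + n * (s^2*(b-a)^2/8) ≤ -2*t^2/(n*(b-a)^2) := by
    have h1 : s * (∑ i, ∫ ω, z i ω ∂μ) ≤ s * (-t) :=
      mul_le_mul_of_nonneg_left hμsum hs0.le
    have h2 : s * (-t) + n * (s^2*(b-a)^2/8) = -2*t^2/(n*(b-a)^2) := by
      rw [hs]
      field_simp
      ring
    linarith
  calc (μ {ω | 0 ≤ ∑ i, z i ω}).toReal ≤ mgf (fun ω => ∑ i, z i ω) μ s := hchern
    _ = ∏ i, mgf (z i) μ s := hmgfsum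
    _ ≤ Real.exp (s * (∑ i, ∫ ω, z i ω ∂μ) + n * (s^2*(b-a)^2/8)) := hprodle
    _ ≤ Real.exp (-2*t^2/(n*(b-a)^2)) := Real.exp_le_exp.mpr hfinal


lemma pairs_indep {Ω : Type*} [MeasurableSpace Ω] {μ : Measure Ω} [IsProbabilityMeasure μ]
    {n : ℕ} {E : Type*} [MeasurableSpace E] {f g : Ω → E} {ev : Fin n → E → ℝ}
    (hev : ∀ i, Measurable (ev i)) (hfm : Measurable f) (hgm : Measurable g)
    (hfg : IndepFun f g μ)
    (hf : iIndepFun (fun i ω => ev i (f ω)) μ)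
    (hg : iIndepFun (fun i ω => ev i (g ω)) μ) :
    iIndepFun (fun i ω => (ev i (f ω), ev i (g ω))) μ := by
  rw [iIndepFun_iff_iIndep]
  set ps : Fin n → Set (Set Ω) := fun i =>
    {S | ∃ A B : Set ℝ, MeasurableSet A ∧ MeasurableSet B ∧
      S = (fun ω => ev i (f ω)) ⁻¹' A ∩ (fun ω => ev i (g ω)) ⁻¹' B} with hps
  have h_pi : ∀ i, IsPiSystem (ps i) := by
    rintro i S ⟨A, B, hA, hB, rfl⟩ T ⟨A', B', hA', hB', rfl⟩ -
    exact ⟨A ∩ A', B ∩ B', hA.inter hA', hB.inter hB', by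
      simp only [Set.preimage_inter]; ext ω; simp; tauto⟩
  have h_gen : ∀ i, MeasurableSpace.comap (fun ω => (ev i (f ω), ev i (g ω)))
      inferInstance = generateFrom (ps i) := by
    intro i
    rw [← generateFrom_prod, MeasurableSpace.comap_generateFrom]
    congr 1
    ext S
    constructor
    · rintro ⟨U, ⟨A, hA, B, hB, rfl⟩, rfl⟩
      exact ⟨A, B, hA, hB, by ext ω; simp [Set.mem_prod]⟩
    · rintro ⟨A, B, hA, hB, rfl⟩
      exact ⟨A ×ˢ B, Set.mem_image2_of_mem hA hB, by ext ω; simp [Set.mem_prod]⟩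
  have h_le : ∀ i, MeasurableSpace.comap (fun ω => (ev i (f ω), ev i (g ω)))
      inferInstance ≤ ‹MeasurableSpace Ω› :=
    fun i => (((hev i).comp hfm).prodMk ((hev i).comp hgm)).comap_le
  apply iIndepSets.iIndep h_le ps h_pi h_gen
  rw [iIndepSets_iff]
  intro S sets hsets
  classical
  choose A B hA hB hAB using fun (i : S) => hsets i i.2
  -- extend to full functions
  set A' : Fin n → Set ℝ := fun i => if h : i ∈ S then A ⟨i, h⟩ else Set.univ with hA'
  set B' : Fin n → Set ℝ := fun i => if h : i ∈ S then B ⟨i, h⟩ else Set.univ with hB'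
  have hsets_eq : ∀ i ∈ S, sets i =
      (fun ω => ev i (f ω)) ⁻¹' (A' i) ∩ (fun ω => ev i (g ω)) ⁻¹' (B' i) := by
    intro i hi
    simp only [hA', hB', dif_pos hi]
    exact hAB ⟨i, hi⟩
  have hA'm : ∀ i, MeasurableSet (A' i) := by
    intro i; simp only [hA']; split
    · exact hA _
    · exact MeasurableSet.univ
  have hB'm : ∀ i, MeasurableSet (B' i) := by
    intro i; simp only [hB']; split
    · exact hB _
    · exact MeasurableSet.univ
  have hsplit : (⋂ i ∈ S, sets i) =
      (⋂ i ∈ S, (fun ω => ev i (f ω)) ⁻¹' (A' i)) ∩ (⋂ i ∈ S, (fun ω => ev i (g ω)) ⁻¹' (B' i)) := by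
    ext ω
    simp only [Set.mem_iInter, Set.mem_inter_iff]
    constructor
    · intro h
      refine ⟨fun i hi => ?_, fun i hi => ?_⟩
      · have := h i hi; rw [hsets_eq i hi] at this; exact this.1
      · have := h i hi; rw [hsets_eq i hi] at this; exact this.2
    · intro ⟨h1, h2⟩ i hi
      rw [hsets_eq i hi]; exact ⟨h1 i hi, h2 i hi⟩
  rw [hsplit]
  -- F-part measurable wrt comap f, G-part wrt comap g
  have hFmeas : MeasurableSet[MeasurableSpace.comap f inferInstance]
      (⋂ i ∈ S, (fun ω => ev i (f ω)) ⁻¹' (A' i)) := by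
    refine ⟨⋂ i ∈ S, (ev i) ⁻¹' (A' i), ?_, by ext ω; simp⟩
    exact MeasurableSet.biInter (Set.to_countable _) (fun i _ => (hev i) (hA'm i))
  have hGmeas : MeasurableSet[MeasurableSpace.comap g inferInstance]
      (⋂ i ∈ S, (fun ω => ev i (g ω)) ⁻¹' (B' i)) := by
    refine ⟨⋂ i ∈ S, (ev i) ⁻¹' (B' i), ?_, by ext ω; simp⟩
    exact MeasurableSet.biInter (Set.to_countable _) (fun i _ => (hev i) (hB'm i))
  rw [hfg.meas_inter hFmeas hGmeas]
  have hFprod : μ (⋂ i ∈ S, (fun ω => ev i (f ω)) ⁻¹' (A' i)) =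
      ∏ i ∈ S, μ ((fun ω => ev i (f ω)) ⁻¹' (A' i)) :=
    hf.meas_biInter (fun i _ => ⟨A' i, hA'm i, rfl⟩)
  have hGprod : μ (⋂ i ∈ S, (fun ω => ev i (g ω)) ⁻¹' (B' i)) =
      ∏ i ∈ S, μ ((fun ω => ev i (g ω)) ⁻¹' (B' i)) :=
    hg.meas_biInter (fun i _ => ⟨B' i, hB'm i, rfl⟩)
  rw [hFprod, hGprod, ← Finset.prod_mul_distrib]
  apply Finset.prod_congr rfl
  intro i hi
  rw [hsets_eq i hi]
  have hpair : IndepFun (fun ω => ev i (f ω)) (fun ω => ev i (g ω)) μ :=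
    hfg.comp (hev i) (hev i)
  exact (hpair.meas_inter ⟨A' i, hA'm i, rfl⟩ ⟨B' i, hB'm i, rfl⟩).symm


set_option maxHeartbeats 1000000 in
theorem stmt_15 {Ω : Type*} [MeasurableSpace Ω] (μ : Measure Ω) [IsProbabilityMeasure μ]
    (n M : ℕ) (X : Fin M → Ω → EuclideanSpace ℝ (Fin n))
    (hmeas : ∀ k, Measurable (X k))
    (hindep : iIndepFun X μ)
    (hcomp : ∀ k, iIndepFun (fun i ω => X k ω i) μ)
    (hrange : ∀ k i ω, X k ω i ∈ Set.Icc (0:ℝ) 1)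
    (μmean : Fin n → ℝ) (hmean : ∀ k i, ∫ ω, X k ω i ∂μ = μmean i)
    (σ0 δ : ℝ) (hσ : 0 < σ0)
    (hvar : ∀ k, σ0^2 ≤ (1/(n:ℝ)) * ∑ i, variance (fun ω => X k ω i) μ)
    (hδ0 : 0 < δ) (hδ1 : δ < 1)
    (c : EuclideanSpace ℝ (Fin n)) (hc : c = WithLp.toLp 2 (fun _ => 1/2))
    (hM : (M:ℝ) < Real.sqrt δ * Real.exp ((256/81) * n * σ0^4)) :
    μ {ω | ∀ k l : Fin M, k ≠ l →
        ⟪X k ω - c, X k ω - c⟫ > ⟪X k ω - c, X l ω - c⟫} > ENNReal.ofReal (1 - δ) := by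
  classical
  have hXi : ∀ (k : Fin M) (i : Fin n), Measurable (fun ω => X k ω i) := fun k i =>
    ((EuclideanSpace.proj (𝕜 := ℝ) i).continuous.measurable).comp (hmeas k)
  set Good := {ω | ∀ k l : Fin M, k ≠ l →
      ⟪X k ω - c, X k ω - c⟫ > ⟪X k ω - c, X l ω - c⟫} with hGood
  have hInnerMeas : ∀ k l : Fin M, Measurable (fun ω => (⟪X k ω - c, X l ω - c⟫ : ℝ)) :=
    fun k l => Measurable.inner ((hmeas k).sub measurable_const) ((hmeas l).sub measurable_const)
  have hGoodMeas : MeasurableSet Good := by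
    have hG2 : Good = ⋂ k, ⋂ l, {ω | k ≠ l →
        ⟪X k ω - c, X k ω - c⟫ > ⟪X k ω - c, X l ω - c⟫} := by
      ext ω; simp [hGood, Set.mem_iInter]
    rw [hG2]
    refine MeasurableSet.iInter fun k => MeasurableSet.iInter fun l => ?_
    by_cases hkl : k = l
    · simp [hkl]
    · simp only [ne_eq, hkl, not_false_eq_true, true_implies, gt_iff_lt]
      exact measurableSet_lt (hInnerMeas k l) (hInnerMeas k k)
  rcases Nat.lt_or_ge M 2 with hM2 | hM2
  · -- M ≤ 1 : Good = univ
    have hGu : Good = Set.univ := by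
      ext ω
      simp only [hGood, Set.mem_setOf_eq, Set.mem_univ, iff_true]
      intro k l hkl
      exact absurd (Fin.ext (by omega)) hkl
    rw [hGu, measure_univ]
    exact ENNReal.ofReal_lt_one.mpr (by linarith)
  · have hM0 : 0 < M := by omega
    have hn : 0 < n := by
      rcases Nat.eq_zero_or_pos n with h0 | h0
      · exfalso
        subst h0
        have := hvar ⟨0, hM0⟩
        simp at this
        nlinarith
      · exact h0
    have hnR : (0:ℝ) < n := Nat.cast_pos.mpr hn
    set p : ℝ := Real.exp (-((512:ℝ)/81)*n*σ0^4) with hp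
    have hp0 : 0 < p := Real.exp_pos _
    -- per pair bound
    have key : ∀ k l : Fin M, k ≠ l →
        (μ {ω | 0 ≤ ∑ i, ((X k ω i - 1/2) * (X l ω i - 1/2) - (X k ω i - 1/2)^2)}).toReal ≤ p := by
      intro k l hkl
      set z : Fin n → Ω → ℝ :=
        fun i ω => (X k ω i - 1/2) * (X l ω i - 1/2) - (X k ω i - 1/2)^2 with hz
      have hzmeas : ∀ i, Measurable (z i) := fun i =>
        (((hXi k i).sub_const _).mul ((hXi l i).sub_const _)).sub
          (((hXi k i).sub_const _).pow_const 2)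
      have hpairs := pairs_indep (ev := fun (i : Fin n) (x : EuclideanSpace ℝ (Fin n)) => x i)
        (fun i => (EuclideanSpace.proj (𝕜 := ℝ) i).continuous.measurable)
        (hmeas k) (hmeas l) (hindep.indepFun hkl) (hcomp k) (hcomp l)
      have hzindep : iIndepFun z μ := by
        have := hpairs.comp
          (g := fun (_ : Fin n) (q : ℝ × ℝ) => (q.1 - 1/2)*(q.2 - 1/2) - (q.1 - 1/2)^2)
          (fun _ => by fun_prop)
        exact this
      have hzbdd : ∀ i ω, z i ω ∈ Set.Icc (-(1/2):ℝ) (1/16) := by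
        intro i ω
        obtain ⟨hu1, hu2⟩ := hrange k i ω
        obtain ⟨hv1, hv2⟩ := hrange l i ω
        constructor
        · simp only [hz]
          nlinarith [sq_nonneg ((X k ω i - 1/2) + (X l ω i - 1/2))]
        · simp only [hz]
          nlinarith [sq_nonneg ((X k ω i - 1/2) - (X l ω i - 1/2)/2)]
      -- means
      have huint : ∀ (m : Fin M) i, Integrable (fun ω => X m ω i - 1/2) μ := fun m i =>
        bdd_integrable ((hXi m i).sub_const _)
          (fun ω => ⟨by linarith [(hrange m i ω).1], by linarith [(hrange m i ω).2]⟩ :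
            ∀ ω, X m ω i - 1/2 ∈ Set.Icc (-(1/2):ℝ) (1/2))
      have hmeanu : ∀ (m : Fin M) i, ∫ ω, (X m ω i - 1/2) ∂μ = μmean i - 1/2 := by
        intro m i
        rw [integral_sub (bdd_integrable (hXi m i) (hrange m i)) (integrable_const _),
          hmean m i, integral_const]
        simp
      have hmeanz : ∀ i, ∫ ω, z i ω ∂μ = -(variance (fun ω => X k ω i) μ) := by
        intro i
        have hprodint : Integrable (fun ω => (X k ω i - 1/2) * (X l ω i - 1/2)) μ := by
          apply bdd_integrable (((hXi k i).sub_const _).mul ((hXi l i).sub_const _))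
            (a := -(1/4)) (b := 1/4)
          intro ω
          obtain ⟨hu1, hu2⟩ := hrange k i ω
          obtain ⟨hv1, hv2⟩ := hrange l i ω
          constructor <;> simp only [Pi.mul_apply] <;> nlinarith
        have hsqint : Integrable (fun ω => (X k ω i - 1/2)^2) μ := by
          apply bdd_integrable (((hXi k i).sub_const _).pow_const 2) (a := 0) (b := 1/4)
          intro ω
          obtain ⟨hu1, hu2⟩ := hrange k i ω
          constructor <;> nlinarith
        have hprod : ∫ ω, (X k ω i - 1/2) * (X l ω i - 1/2) ∂μ =
            (μmean i - 1/2) * (μmean i - 1/2) := by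
          have hfg : IndepFun (fun ω => X k ω i - 1/2) (fun ω => X l ω i - 1/2) μ := by
            have hbase : IndepFun (fun ω => X k ω i) (fun ω => X l ω i) μ :=
              (hindep.indepFun hkl).comp
                (EuclideanSpace.proj (𝕜 := ℝ) i).continuous.measurable
                (EuclideanSpace.proj (𝕜 := ℝ) i).continuous.measurable
            exact hbase.comp (measurable_id.sub_const (1/2)) (measurable_id.sub_const (1/2))
          have h3 := hfg.integral_fun_mul_eq_mul_integral (huint k i).1 (huint l i).1
          calc ∫ ω, (X k ω i - 1/2) * (X l ω i - 1/2) ∂μ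
              = (∫ ω, (X k ω i - 1/2) ∂μ) * ∫ ω, (X l ω i - 1/2) ∂μ := h3
            _ = (μmean i - 1/2) * (μmean i - 1/2) := by rw [hmeanu k i, hmeanu l i]
        have hsq : ∫ ω, (X k ω i - 1/2)^2 ∂μ =
            variance (fun ω => X k ω i) μ + (μmean i - 1/2)^2 := by
          have hmem : MemLp (fun ω => X k ω i) 2 μ :=
            MemLp.of_bound (hXi k i).aestronglyMeasurable 1 (ae_of_all _ fun ω => by
              rw [Real.norm_eq_abs, abs_le]
              exact ⟨by linarith [(hrange k i ω).1], (hrange k i ω).2⟩)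
          have hXint : Integrable (fun ω => X k ω i) μ := bdd_integrable (hXi k i) (hrange k i)
          have hX2int : Integrable (fun ω => (X k ω i)^2) μ := by
            apply bdd_integrable ((hXi k i).pow_const 2) (a := 0) (b := 1)
            intro ω
            obtain ⟨h1, h2⟩ := hrange k i ω
            constructor <;> nlinarith
          have hf' : Integrable (fun ω => (X k ω i)^2 - X k ω i) μ := hX2int.sub hXint
          have h1 : ∫ ω, (X k ω i - 1/2)^2 ∂μ =
              (∫ ω, (X k ω i)^2 ∂μ) - (∫ ω, X k ω i ∂μ) + 1/4 := by
            have hexpand : (fun ω => (X k ω i - 1/2)^2) =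
                (fun ω => ((X k ω i)^2 - X k ω i) + 1/4) := by
              ext ω; ring
            rw [hexpand, integral_add hf' (integrable_const _),
              integral_sub hX2int hXint, integral_const]
            simp
          have h2 : variance (fun ω => X k ω i) μ =
              (∫ ω, (X k ω i)^2 ∂μ) - (∫ ω, X k ω i ∂μ)^2 := variance_eq_sub hmem
          rw [h1, h2, hmean k i]
          ring
        rw [hz]
        show ∫ ω, ((X k ω i - 1/2) * (X l ω i - 1/2) - (X k ω i - 1/2)^2) ∂μ = _
        rw [integral_sub hprodint hsqint, hprod, hsq]
        ring
      have hsummean : ∑ i, ∫ ω, z i ω ∂μ ≤ -((n:ℝ)*σ0^2) := by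
        have h1 : ∑ i, ∫ ω, z i ω ∂μ = -(∑ i, variance (fun ω => X k ω i) μ) := by
          rw [← Finset.sum_neg_distrib]
          exact Finset.sum_congr rfl (fun i _ => by rw [hmeanz i])
        rw [h1, neg_le_neg_iff]
        have := hvar k
        rw [div_mul_eq_mul_div, one_mul] at this
        calc (n:ℝ)*σ0^2 ≤ (n:ℝ) * ((∑ i, variance (fun ω => X k ω i) μ) / n) := by
              apply mul_le_mul_of_nonneg_left _ hnR.le
              exact this
          _ = ∑ i, variance (fun ω => X k ω i) μ := by field_simp
      have hbound := hoeffding_sum μ hn hzmeas hzindep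
        (by norm_num : (-(1/2):ℝ) < 1/16) hzbdd
        (t := (n:ℝ)*σ0^2) (by positivity) hsummean
      have hexpo : -2*((n:ℝ)*σ0^2)^2/((n:ℝ)*((1/16:ℝ) - -(1/2))^2) = -((512:ℝ)/81)*n*σ0^4 := by
        field_simp
        ring
      rw [hexpo] at hbound
      exact hbound
    -- set identity
    have hSetEq : ∀ k l : Fin M,
        {ω | ⟪X k ω - c, X k ω - c⟫ ≤ ⟪X k ω - c, X l ω - c⟫} =
        {ω | 0 ≤ ∑ i, ((X k ω i - 1/2) * (X l ω i - 1/2) - (X k ω i - 1/2)^2)} := by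
      intro k l
      ext ω
      simp only [Set.mem_setOf_eq]
      have hinner : ∀ (y : Fin M), ⟪X k ω - c, X y ω - c⟫ =
          ∑ i, (X k ω i - 1/2) * (X y ω i - 1/2) := by
        intro y
        rw [PiLp.inner_apply]
        apply Finset.sum_congr rfl
        intro i _
        rw [hc]
        simp [RCLike.inner_apply, PiLp.sub_apply]; ring
      rw [hinner k, hinner l]
      rw [Finset.sum_sub_distrib (f := fun i => (X k ω i - 1/2) * (X l ω i - 1/2))]
      constructor
      · intro h
        have : ∑ i, (X k ω i - 1/2)^2 = ∑ i, (X k ω i - 1/2) * (X k ω i - 1/2) :=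
          Finset.sum_congr rfl (fun i _ => sq (X k ω i - 1/2) ▸ by ring)
        rw [this]
        linarith
      · intro h
        have : ∑ i, (X k ω i - 1/2)^2 = ∑ i, (X k ω i - 1/2) * (X k ω i - 1/2) :=
          Finset.sum_congr rfl (fun i _ => by ring)
        rw [this] at h
        linarith
    -- union bound
    set T : Fin M → Fin M → Set Ω := fun k l =>
      {ω | k ≠ l ∧ ⟪X k ω - c, X k ω - c⟫ ≤ ⟪X k ω - c, X l ω - c⟫} with hT
    have hsub : Goodᶜ ⊆ ⋃ k, ⋃ l, T k l := by
      intro ω hω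
      simp only [hGood, Set.mem_compl_iff, Set.mem_setOf_eq, not_forall] at hω
      obtain ⟨k, l, hkl, hle⟩ := hω
      exact Set.mem_iUnion.mpr ⟨k, Set.mem_iUnion.mpr ⟨l, ⟨hkl, not_lt.mp hle⟩⟩⟩
    have hTbound : ∀ k l : Fin M, μ (T k l) ≤ ENNReal.ofReal p := by
      intro k l
      by_cases hkl : k = l
      · have : T k l = ∅ := by
          ext ω; simp [hT, hkl]
        rw [this, measure_empty]
        exact zero_le
      · have hsub2 : T k l ⊆ {ω | ⟪X k ω - c, X k ω - c⟫ ≤ ⟪X k ω - c, X l ω - c⟫} :=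
          fun ω hω => hω.2
        calc μ (T k l) ≤ μ {ω | ⟪X k ω - c, X k ω - c⟫ ≤ ⟪X k ω - c, X l ω - c⟫} :=
              measure_mono hsub2
          _ ≤ ENNReal.ofReal p := by
              rw [hSetEq k l]
              rw [← ENNReal.ofReal_toReal (measure_ne_top μ _)]
              exact ENNReal.ofReal_le_ofReal (key k l hkl)
    have hbadU : μ Goodᶜ ≤ (M:ℝ≥0∞) * (M:ℝ≥0∞) * ENNReal.ofReal p := by
      calc μ Goodᶜ ≤ μ (⋃ k, ⋃ l, T k l) := measure_mono hsub
        _ ≤ ∑' (k : Fin M), μ (⋃ l, T k l) := measure_iUnion_le _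
        _ ≤ ∑' (k : Fin M), ∑' (l : Fin M), μ (T k l) :=
            ENNReal.tsum_le_tsum (fun k => measure_iUnion_le _)
        _ ≤ ∑' (_k : Fin M), ∑' (_l : Fin M), ENNReal.ofReal p :=
            ENNReal.tsum_le_tsum (fun k => ENNReal.tsum_le_tsum (fun l => hTbound k l))
        _ = (M:ℝ≥0∞) * (M:ℝ≥0∞) * ENNReal.ofReal p := by
            rw [tsum_fintype]
            simp_rw [tsum_fintype]
            simp [Finset.sum_const, Finset.card_univ, Fintype.card_fin, nsmul_eq_mul]
            ring
    have hMMp : (M:ℝ)*M*p < δ := by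
      have hE : (0:ℝ) < Real.exp ((256/81) * n * σ0^4) := Real.exp_pos _
      have hMM : (M:ℝ)*M < δ * Real.exp (((512:ℝ)/81)*n*σ0^4) := by
        have h2 := mul_self_lt_mul_self (Nat.cast_nonneg M) hM
        calc (M:ℝ)*M < (Real.sqrt δ * Real.exp ((256/81) * n * σ0^4)) *
              (Real.sqrt δ * Real.exp ((256/81) * n * σ0^4)) := h2
          _ = (Real.sqrt δ * Real.sqrt δ) *
              (Real.exp ((256/81) * n * σ0^4) * Real.exp ((256/81) * n * σ0^4)) := by ring
          _ = δ * Real.exp (((512:ℝ)/81)*n*σ0^4) := by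
              rw [Real.mul_self_sqrt hδ0.le, ← Real.exp_add]
              congr 1
              ring
      calc (M:ℝ)*M*p < (δ * Real.exp (((512:ℝ)/81)*n*σ0^4)) * p :=
            mul_lt_mul_of_pos_right hMM hp0
        _ = δ := by
            rw [hp, mul_assoc, ← Real.exp_add]
            have harg : (512:ℝ)/81*n*σ0^4 + -((512:ℝ)/81)*n*σ0^4 = 0 := by ring
            rw [harg, Real.exp_zero, mul_one]
    have hbad2 : μ Goodᶜ ≤ ENNReal.ofReal ((M:ℝ)*M*p) := by
      calc μ Goodᶜ ≤ (M:ℝ≥0∞) * (M:ℝ≥0∞) * ENNReal.ofReal p := hbadU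
        _ = ENNReal.ofReal ((M:ℝ)*M*p) := by
            rw [ENNReal.ofReal_mul (by positivity), ENNReal.ofReal_mul (by positivity)]
            congr 1
            · congr 1 <;> simp [ENNReal.ofReal_natCast]
    have hbadlt : μ Goodᶜ < ENNReal.ofReal δ :=
      lt_of_le_of_lt hbad2 ((ENNReal.ofReal_lt_ofReal_iff hδ0).mpr hMMp)
    -- conclude
    have hsum1 : (μ Good).toReal + (μ Goodᶜ).toReal = 1 := by
      have h := congrArg ENNReal.toReal (measure_add_measure_compl (μ := μ) hGoodMeas)
      rwa [ENNReal.toReal_add (measure_ne_top _ _) (measure_ne_top _ _),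
        measure_univ, ENNReal.toReal_one] at h
    have hbadR : (μ Goodᶜ).toReal < δ := by
      have h1 : (μ Goodᶜ).toReal ≤ ((ENNReal.ofReal ((M:ℝ)*M*p))).toReal :=
        ENNReal.toReal_mono ENNReal.ofReal_ne_top hbad2
      rw [ENNReal.toReal_ofReal (by positivity)] at h1
      linarith
    rw [gt_iff_lt, ENNReal.ofReal_lt_iff_lt_toReal (by linarith) (measure_ne_top μ Good)]
    linarith
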